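/- Let α > 0 with α ≠ 1, and define s_α : [0,1] → ℝ by s_α(x) = (1/(1−α)) · (x^α + (1−x)^α − 1). Then s_α satisfies s_α(1−x) + (1−x)^α · s_α(y/(1−x)) = s_α(y) + (1−y)^α · s_α((1−x−y)/(1−y)) for all x, y ∈ [0,1) with x + y ≤ 1. -/

import Mathlib

/-- For `α ≠ 1`, the generalized information function `s_α(x) = (1/(1-α))(x^α + (1-x)^α - 1)`. -/
noncomputable def sAlpha (α : ℝ) (x : ℝ) : ℝ := (1 / (1 - α)) * (x ^ α + (1 - x) ^ α - 1)

/-- For `0 < α`, `α ≠ 1`, the function `s_α` satisfies the fundamental functional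
equation. -/
theorem stmt18 (α : ℝ) (hα : 0 < α) (hα1 : α ≠ 1) :
    ∀ x y : ℝ, 0 ≤ x → x < 1 → 0 ≤ y → y < 1 → x + y ≤ 1 →
      sAlpha α (1 - x) + (1 - x) ^ α * sAlpha α (y / (1 - x))
        = sAlpha α y + (1 - y) ^ α * sAlpha α ((1 - x - y) / (1 - y)) := by
  intro x y hx hx1 hy hy1 hxy
  have h1x : (0:ℝ) < 1 - x := by linarith
  have h1y : (0:ℝ) < 1 - y := by linarith
  have hz : (0:ℝ) ≤ 1 - x - y := by linarith
  have e1 : 1 - y / (1 - x) = (1 - x - y) / (1 - x) := by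
    field_simp
  have e2 : 1 - (1 - x - y) / (1 - y) = x / (1 - y) := by
    field_simp
    ring
  have hpx : (1 - x) ^ α ≠ 0 := (Real.rpow_pos_of_pos h1x α).ne'
  have hpy : (1 - y) ^ α ≠ 0 := (Real.rpow_pos_of_pos h1y α).ne'
  simp only [sAlpha, e1, e2, Real.div_rpow hy h1x.le, Real.div_rpow hz h1x.le,
    Real.div_rpow hz h1y.le, Real.div_rpow hx h1y.le]
  have ha : (1:ℝ) - α ≠ 0 := sub_ne_zero.mpr (Ne.symm hα1)
  field_simp [ha]
  ring
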